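/- Let n ≥ 2k+1 and let F be a nonempty family of k-subsets of [n] with indicator function f and density α = |F|/binom(n,k). Write f = f₀ + f₁ + ... + f_k for the eigenspace decomposition of f with respect to the Kneser graph K(n,k), and let η = ‖f₁‖²/‖f‖². Then the number of edges of K(n,k) inside F satisfies 2·e(F) ≥ |F| · binom(n-k,k) · (α - (k/(n-k))·(η + (k/(n-k))²)). In particular the maximum degree of K(n,k)[F] is at least binom(n-k,k)·(α - (k/(n-k))·(η + (k/(n-k))²)). -/

import Mathlib

open Finset


lemma aux_choose_lt (m j : ℕ) (hm : 1 ≤ m) : (j + m).choose j < (j + 1 + m).choose (j + 1) := by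
  have h1 : (j + 1 + m).choose (j + 1) = (j + m).choose j + (j + m).choose (j + 1) := by
    have := Nat.choose_succ_succ (j + m) j
    have e : j + 1 + m = (j + m) + 1 := by omega
    rw [e, this]
  have h2 : 0 < (j + m).choose (j + 1) := Nat.choose_pos (by omega)
  omega

lemma aux_anti (n k : ℕ) (hn : 2 * k + 1 ≤ n) :
    ∀ j ≤ k, ∀ i < j, (n - k - j).choose (k - j) < (n - k - i).choose (k - i) := by
  intro j
  induction j with
  | zero => intro _ i hi; omega
  | succ j ih =>
    intro hj i hi
    have step : (n - k - (j+1)).choose (k - (j+1)) < (n - k - j).choose (k - j) := by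
      have := aux_choose_lt (n - 2*k) (k - (j+1)) (by omega)
      have e1 : k - (j+1) + (n - 2*k) = n - k - (j+1) := by omega
      have e2 : k - (j+1) + 1 + (n - 2*k) = n - k - j := by omega
      have e3 : k - (j+1) + 1 = k - j := by omega
      rw [e1, e2, e3] at this
      exact this
    rcases Nat.lt_succ_iff_lt_or_eq.mp hi with h | h
    · exact lt_trans step (ih (by omega) i h)
    · rw [h]; exact step

lemma aux_ratio (n k : ℕ) (hn : 2 * k + 1 ≤ n) :
    ∀ i ≤ k, (n - k) ^ i * (n - k - i).choose (k - i) ≤ k ^ i * (n - k).choose k := by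
  intro i
  induction i with
  | zero => simp
  | succ i ih =>
    intro hi
    have hiK : i ≤ k := by omega
    have key : (n - k) * (n - k - (i+1)).choose (k - (i+1)) ≤ k * (n - k - i).choose (k - i) := by
      have hpos : 0 < n - k - i := by omega
      apply Nat.le_of_mul_le_mul_right _ hpos
      have id1 : (n - k - i) * (n - k - i - 1).choose (k - i - 1) = (n - k - i).choose (k - i) * (k - i) := by
        have := Nat.add_one_mul_choose_eq (n - k - i - 1) (k - i - 1)
        have e1 : (n - k - i - 1) + 1 = n - k - i := by omega
        have e2 : (k - i - 1) + 1 = k - i := by omega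
        rw [e1, e2] at this
        exact this
      have e3 : n - k - (i+1) = n - k - i - 1 := by omega
      have e4 : k - (i+1) = k - i - 1 := by omega
      calc (n - k) * (n - k - (i+1)).choose (k - (i+1)) * (n - k - i)
          = (n - k) * ((n - k - i) * (n - k - i - 1).choose (k - i - 1)) := by rw [e3, e4]; ring
        _ = (n - k) * ((n - k - i).choose (k - i) * (k - i)) := by rw [id1]
        _ = ((n - k) * (k - i)) * (n - k - i).choose (k - i) := by ring
        _ ≤ (k * (n - k - i)) * (n - k - i).choose (k - i) := by
            apply Nat.mul_le_mul_right
            have h1 : i ≤ k := hiK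
            have h2 : k ≤ n - k := by omega
            zify [h1, show i ≤ n - k by omega]
            nlinarith [Int.ofNat_le.mpr h2]
        _ = k * (n - k - i).choose (k - i) * (n - k - i) := by ring
    calc (n - k) ^ (i+1) * (n - k - (i+1)).choose (k - (i+1))
        = (n - k) ^ i * ((n - k) * (n - k - (i+1)).choose (k - (i+1))) := by ring
      _ ≤ (n - k) ^ i * (k * (n - k - i).choose (k - i)) := Nat.mul_le_mul_left _ key
      _ = k * ((n - k) ^ i * (n - k - i).choose (k - i)) := by ring
      _ ≤ k * (k ^ i * (n - k).choose k) := Nat.mul_le_mul_left _ (ih hiK)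
      _ = k ^ (i+1) * (n - k).choose k := by ring

noncomputable def Dval (n k i : ℕ) : ℝ := (-1) ^ i * ((n - k - i).choose (k - i) : ℝ)

lemma Dval_abs (n k i : ℕ) : |Dval n k i| = ((n - k - i).choose (k - i) : ℝ) := by
  rw [Dval, abs_mul, abs_pow, abs_neg, abs_one, one_pow, one_mul, Nat.abs_cast]

lemma Dval_ne (n k : ℕ) (hn : 2 * k + 1 ≤ n) {i j : ℕ} (hi : i ≤ k) (hj : j ≤ k)
    (hij : i ≠ j) : Dval n k i ≠ Dval n k j := by
  have key : ∀ a b : ℕ, a ≤ k → b ≤ k → a < b → Dval n k a ≠ Dval n k b := by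
    intro a b ha hb hab heq
    have h1 : (n - k - b).choose (k - b) < (n - k - a).choose (k - a) := aux_anti n k hn b hb a hab
    have h2 : |Dval n k b| < |Dval n k a| := by
      rw [Dval_abs, Dval_abs]; exact_mod_cast h1
    rw [heq] at h2; exact lt_irrefl _ h2
  rcases lt_or_gt_of_ne hij with h | h
  · exact key i j hi hj h
  · exact fun heq => key j i hj hi h heq.symm

lemma ratio_real (n k : ℕ) (hn : 2 * k + 1 ≤ n) (i : ℕ) (hi : i ≤ k) :
    ((n - k - i).choose (k - i) : ℝ)
      ≤ ((k : ℝ) / ((n : ℝ) - (k : ℝ))) ^ i * ((n - k).choose k : ℝ) := by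
  have hkn : k ≤ n := by omega
  have hnk : ((n : ℝ) - (k : ℝ)) = ((n - k : ℕ) : ℝ) := by
    rw [Nat.cast_sub hkn]
  have hpos : (0 : ℝ) < ((n - k : ℕ) : ℝ) := by
    have : 0 < n - k := by omega
    exact_mod_cast this
  rw [hnk, div_pow, div_mul_eq_mul_div, le_div_iff₀ (by positivity)]
  have := aux_ratio n k hn i hi
  calc ((n - k - i).choose (k - i) : ℝ) * ((n - k : ℕ) : ℝ) ^ i
      = (((n - k) ^ i * (n - k - i).choose (k - i) : ℕ) : ℝ) := by push_cast; ring
    _ ≤ (((k : ℕ) ^ i * (n - k).choose k : ℕ) : ℝ) := by exact_mod_cast this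
    _ = (k : ℝ) ^ i * ((n - k).choose k : ℝ) := by push_cast; ring

/-- If `F` is a nonempty family of `k`-subsets of `[n]` (with `n ≥ 2k+1`) of density `α`,
whose indicator `f` has eigenspace decomposition `f = g 0 + g 1 + ⋯ + g k` with respect to
the Kneser graph (with `g 0 = α·1` the constant part), and `η = ‖g 1‖²/‖f‖²`, then the
number of ordered disjoint pairs in `F` (i.e. `2·e(F)`) is at least
`|F|·C(n-k,k)·(α - (k/(n-k))·(η + (k/(n-k))²))`; in particular some `A ∈ F` is disjoint
from at least `C(n-k,k)·(α - (k/(n-k))·(η + (k/(n-k))²))` members of `F`. -/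
theorem stmt_9 (n k : ℕ) (hn : 2 * k + 1 ≤ n) (hk : 1 ≤ k)
    (F : Finset {A : Finset (Fin n) // A.card = k}) (hF : F.Nonempty)
    (α : ℝ) (hα : α = (F.card : ℝ) / (n.choose k : ℝ))
    (f : {A : Finset (Fin n) // A.card = k} → ℝ)
    (hf : f = fun A => if A ∈ F then (1 : ℝ) else 0)
    (g : ℕ → {A : Finset (Fin n) // A.card = k} → ℝ)
    (hdecomp : f = ∑ i ∈ Finset.range (k + 1), g i)
    (hg0 : g 0 = fun _ => α)
    (heig : ∀ i ≤ k, ∀ A, ∑ B, (if Disjoint A.val B.val then g i B else 0)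
      = ((-1) ^ i * ((n - k - i).choose (k - i) : ℝ)) * g i A)
    (η : ℝ) (hη : η * ∑ A, (f A) ^ 2 = ∑ A, (g 1 A) ^ 2) :
    (((F ×ˢ F).filter (fun p => Disjoint p.1.val p.2.val)).card : ℝ)
        ≥ (F.card : ℝ) * ((n - k).choose k : ℝ)
            * (α - (k : ℝ) / ((n : ℝ) - k) * (η + ((k : ℝ) / ((n : ℝ) - k)) ^ 2)) ∧
      ∃ A ∈ F, ((F.filter (fun B => Disjoint A.val B.val)).card : ℝ)
        ≥ ((n - k).choose k : ℝ)
            * (α - (k : ℝ) / ((n : ℝ) - k) * (η + ((k : ℝ) / ((n : ℝ) - k)) ^ 2)) := by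
  classical
  have heig' : ∀ i ≤ k, ∀ A, ∑ B, (if Disjoint A.val B.val then g i B else 0)
      = Dval n k i * g i A := by
    intro i hi A; rw [Dval]; exact heig i hi A
  set r : ℝ := (k : ℝ) / ((n : ℝ) - k) with hrdef
  set C : ℝ := ((n - k).choose k : ℝ) with hCdef
  have hknR : (0 : ℝ) < (n : ℝ) - k := by
    have : (k : ℝ) < (n : ℝ) := by exact_mod_cast (by omega : k < n)
    linarith
  have hr0 : 0 ≤ r := by positivity
  have hr1 : r ≤ 1 := by
    rw [hrdef, div_le_one hknR]
    have : (2 * k + 1 : ℝ) ≤ (n : ℝ) := by exact_mod_cast hn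
    push_cast at this ⊢; linarith
  have hC0 : 0 ≤ C := by positivity
  -- symmetry of the double sum
  have Tsymm : ∀ a b : ℕ,
      (∑ A, ∑ B, if Disjoint A.val B.val then g a A * g b B else 0)
      = ∑ A, ∑ B, if Disjoint A.val B.val then g b A * g a B else 0 := by
    intro a b
    rw [Finset.sum_comm]
    refine Finset.sum_congr rfl fun A _ => Finset.sum_congr rfl fun B _ => ?_
    exact if_congr disjoint_comm (mul_comm _ _) rfl
  have key : ∀ a ≤ k, ∀ b ≤ k, Dval n k b * ∑ A, g a A * g b A
      = ∑ A, ∑ B, if Disjoint A.val B.val then g a A * g b B else 0 := by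
    intro a ha b hb
    rw [Finset.mul_sum]
    refine Finset.sum_congr rfl fun A _ => ?_
    calc Dval n k b * (g a A * g b A) = g a A * (Dval n k b * g b A) := by ring
      _ = g a A * ∑ B, (if Disjoint A.val B.val then g b B else 0) := by
          rw [heig' b hb A]
      _ = ∑ B, (if Disjoint A.val B.val then g a A * g b B else 0) := by
          rw [Finset.mul_sum]
          exact Finset.sum_congr rfl fun B _ => by split <;> simp
  have orth : ∀ a ≤ k, ∀ b ≤ k, a ≠ b → ∑ A, g a A * g b A = 0 := by
    intro a ha b hb hab
    have h1 := key a ha b hb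
    have h2 := key b hb a ha
    have hcomm : ∑ A, g b A * g a A = ∑ A, g a A * g b A :=
      Finset.sum_congr rfl fun A _ => mul_comm _ _
    rw [hcomm, Tsymm b a] at h2
    have h3 : (Dval n k b - Dval n k a) * ∑ A, g a A * g b A = 0 := by
      rw [sub_mul, h1, h2, Tsymm a b, sub_self]
    have hne : Dval n k b - Dval n k a ≠ 0 :=
      sub_ne_zero.mpr (Dval_ne n k hn hb ha (Ne.symm hab))
    exact (mul_eq_zero.mp h3).resolve_left hne
  have hw0 : ∀ i : ℕ, (0:ℝ) ≤ ∑ A, (g i A) ^ 2 :=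
    fun i => Finset.sum_nonneg fun A _ => sq_nonneg _
  have hfapp : ∀ A, f A = ∑ i ∈ Finset.range (k + 1), g i A := by
    intro A; rw [hdecomp]; simp
  have hfg : ∀ b ≤ k, ∑ A, f A * g b A = ∑ A, (g b A) ^ 2 := by
    intro b hb
    calc ∑ A, f A * g b A
        = ∑ A, ∑ i ∈ Finset.range (k + 1), g i A * g b A := by
          refine Finset.sum_congr rfl fun A _ => ?_
          rw [hfapp A, Finset.sum_mul]
      _ = ∑ i ∈ Finset.range (k + 1), ∑ A, g i A * g b A := Finset.sum_comm
      _ = ∑ A, (g b A) ^ 2 := by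
          rw [Finset.sum_eq_single b]
          · exact Finset.sum_congr rfl fun A _ => (pow_two _).symm
          · intro i hi hib
            exact orth i (by simp at hi; omega) b hb hib
          · intro h; exact absurd (Finset.mem_range.mpr (by omega)) h
  have hsumf2 : ∑ A, (f A) ^ 2 = (F.card : ℝ) := by
    have h1 : ∀ A, (f A) ^ 2 = if A ∈ F then (1:ℝ) else 0 := by
      intro A; rw [hf]; by_cases h : A ∈ F <;> simp [h]
    simp only [h1]
    rw [Finset.sum_ite_mem, Finset.univ_inter, Finset.sum_const, nsmul_eq_mul, mul_one]
  have hparseval : ∑ i ∈ Finset.range (k + 1), ∑ A, (g i A) ^ 2 = (F.card : ℝ) := by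
    rw [← hsumf2]
    calc ∑ i ∈ Finset.range (k + 1), ∑ A, (g i A) ^ 2
        = ∑ i ∈ Finset.range (k + 1), ∑ A, g i A * f A := by
          refine Finset.sum_congr rfl fun i hi => ?_
          rw [show ∑ A, g i A * f A = ∑ A, f A * g i A from
            Finset.sum_congr rfl fun A _ => mul_comm _ _, hfg i (by simp at hi; omega)]
      _ = ∑ A, ∑ i ∈ Finset.range (k + 1), g i A * f A := Finset.sum_comm
      _ = ∑ A, (f A) ^ 2 := by
          refine Finset.sum_congr rfl fun A _ => ?_
          rw [← Finset.sum_mul, ← hfapp A, sq]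
  have hchoose_pos : (0:ℝ) < (n.choose k : ℝ) := by
    exact_mod_cast Nat.choose_pos (by omega : k ≤ n)
  have hαF : α * (n.choose k : ℝ) = (F.card : ℝ) := by
    rw [hα]; field_simp
  have hw0val : ∑ A, (g 0 A) ^ 2 = α * (F.card : ℝ) := by
    have hcardV : ((Fintype.card {A : Finset (Fin n) // A.card = k} : ℕ) : ℝ)
        = (n.choose k : ℝ) := by
      have : Fintype.card {A : Finset (Fin n) // A.card = k} = n.choose k := by
        simp [Fintype.card_finset_len]
      exact_mod_cast this
    simp only [hg0]
    rw [Finset.sum_const, nsmul_eq_mul, Finset.card_univ, hcardV, ← hαF]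
    ring
  have hw1val : ∑ A, (g 1 A) ^ 2 = η * (F.card : ℝ) := by
    rw [← hη, hsumf2]
  -- edge count identities
  have hE1 : (((F ×ˢ F).filter (fun p => Disjoint p.1.val p.2.val)).card : ℝ)
      = ∑ A ∈ F, ∑ B ∈ F, (if Disjoint A.val B.val then (1:ℝ) else 0) := by
    rw [← Finset.sum_boole, Finset.sum_product]
  have inner1 : ∀ A : {A : Finset (Fin n) // A.card = k},
      (∑ B, if Disjoint A.val B.val then f B else 0)
      = ∑ B ∈ F, (if Disjoint A.val B.val then (1:ℝ) else 0) := by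
    intro A
    calc (∑ B, if Disjoint A.val B.val then f B else 0)
        = ∑ B, (if B ∈ F then (if Disjoint A.val B.val then (1:ℝ) else 0) else 0) := by
          refine Finset.sum_congr rfl fun B _ => ?_
          rw [hf]
          by_cases h1 : Disjoint A.val B.val <;> by_cases h2 : B ∈ F <;> simp [h1, h2]
      _ = ∑ B ∈ F, (if Disjoint A.val B.val then (1:ℝ) else 0) := by
          rw [Finset.sum_ite_mem, Finset.univ_inter]
  have hE2 : ∑ A ∈ F, ∑ B ∈ F, (if Disjoint A.val B.val then (1:ℝ) else 0)
      = ∑ A, f A * (∑ B, if Disjoint A.val B.val then f B else 0) := by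
    calc ∑ A ∈ F, ∑ B ∈ F, (if Disjoint A.val B.val then (1:ℝ) else 0)
        = ∑ A ∈ F, (∑ B, if Disjoint A.val B.val then f B else 0) :=
          Finset.sum_congr rfl fun A _ => (inner1 A).symm
      _ = ∑ A, (if A ∈ F then (∑ B, if Disjoint A.val B.val then f B else 0) else 0) := by
          rw [Finset.sum_ite_mem, Finset.univ_inter]
      _ = ∑ A, f A * (∑ B, if Disjoint A.val B.val then f B else 0) := by
          refine Finset.sum_congr rfl fun A _ => ?_
          by_cases h : A ∈ F
          · have hfA : f A = 1 := by rw [hf]; simp [h]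
            rw [if_pos h, hfA, one_mul]
          · have hfA : f A = 0 := by rw [hf]; simp [h]
            rw [if_neg h, hfA, zero_mul]
  have hMf : ∀ A, (∑ B, if Disjoint A.val B.val then f B else 0)
      = ∑ j ∈ Finset.range (k + 1), Dval n k j * g j A := by
    intro A
    calc (∑ B, if Disjoint A.val B.val then f B else 0)
        = ∑ B, ∑ j ∈ Finset.range (k + 1), (if Disjoint A.val B.val then g j B else 0) := by
          refine Finset.sum_congr rfl fun B _ => ?_
          rw [hfapp B]
          split <;> simp
      _ = ∑ j ∈ Finset.range (k + 1), ∑ B, (if Disjoint A.val B.val then g j B else 0) :=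
          Finset.sum_comm
      _ = ∑ j ∈ Finset.range (k + 1), Dval n k j * g j A :=
          Finset.sum_congr rfl fun j hj => heig' j (by simp at hj; omega) A
  have hEspec : (((F ×ˢ F).filter (fun p => Disjoint p.1.val p.2.val)).card : ℝ)
      = ∑ j ∈ Finset.range (k + 1), Dval n k j * ∑ A, (g j A) ^ 2 := by
    rw [hE1, hE2]
    calc ∑ A, f A * (∑ B, if Disjoint A.val B.val then f B else 0)
        = ∑ A, ∑ j ∈ Finset.range (k + 1), Dval n k j * (f A * g j A) := by
          refine Finset.sum_congr rfl fun A _ => ?_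
          rw [hMf A, Finset.mul_sum]
          exact Finset.sum_congr rfl fun j _ => by ring
      _ = ∑ j ∈ Finset.range (k + 1), Dval n k j * ∑ A, f A * g j A := by
          rw [Finset.sum_comm]
          exact Finset.sum_congr rfl fun j _ => by rw [Finset.mul_sum]
      _ = ∑ j ∈ Finset.range (k + 1), Dval n k j * ∑ A, (g j A) ^ 2 := by
          refine Finset.sum_congr rfl fun j hj => ?_
          rw [hfg j (by simp at hj; omega)]
  -- split the spectral sum
  have hsplit : ∑ j ∈ Finset.range (k + 1), Dval n k j * ∑ A, (g j A) ^ 2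
      = Dval n k 0 * ∑ A, (g 0 A) ^ 2 + Dval n k 1 * ∑ A, (g 1 A) ^ 2
        + ∑ j ∈ Finset.Ico 2 (k + 1), Dval n k j * ∑ A, (g j A) ^ 2 := by
    rw [Finset.range_eq_Ico,
      ← Finset.sum_Ico_consecutive _ (by omega : 0 ≤ 2) (by omega : 2 ≤ k + 1)]
    congr 1
    rw [show Finset.Ico 0 2 = {0, 1} from rfl]
    simp
  have hwsplit : (∑ A, (g 0 A) ^ 2) + (∑ A, (g 1 A) ^ 2)
      + ∑ j ∈ Finset.Ico 2 (k + 1), ∑ A, (g j A) ^ 2 = (F.card : ℝ) := by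
    rw [← hparseval, Finset.range_eq_Ico,
      ← Finset.sum_Ico_consecutive _ (by omega : 0 ≤ 2) (by omega : 2 ≤ k + 1)]
    congr 1
    rw [show Finset.Ico 0 2 = {0, 1} from rfl]
    simp
  have htailw : ∑ j ∈ Finset.Ico 2 (k + 1), ∑ A, (g j A) ^ 2 ≤ (F.card : ℝ) := by
    have := hw0 0; have := hw0 1; linarith
  -- eigenvalue bounds
  have hD0 : Dval n k 0 = C := by simp [Dval, hCdef]
  have hD1 : -(r * C) ≤ Dval n k 1 := by
    have h := ratio_real n k hn 1 hk
    rw [pow_one] at h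
    have hd : Dval n k 1 = -(((n - k - 1).choose (k - 1) : ℝ)) := by simp [Dval]
    rw [hd, hrdef, hCdef]
    linarith
  have hDtail : ∀ j ∈ Finset.Ico 2 (k + 1), -(r ^ 3 * C) ≤ Dval n k j := by
    intro j hj
    simp only [Finset.mem_Ico] at hj
    rcases Nat.even_or_odd j with he | ho
    · have hd : Dval n k j = ((n - k - j).choose (k - j) : ℝ) := by
        rw [Dval, he.neg_one_pow, one_mul]
      rw [hd]
      have h0 : (0:ℝ) ≤ ((n - k - j).choose (k - j) : ℝ) := Nat.cast_nonneg _
      have h1 : (0:ℝ) ≤ r ^ 3 * C := mul_nonneg (pow_nonneg hr0 3) hC0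
      linarith
    · have hj3 : 3 ≤ j := by have := Nat.odd_iff.mp ho; omega
      have hd : Dval n k j = -((n - k - j).choose (k - j) : ℝ) := by
        rw [Dval, ho.neg_one_pow]; ring
      rw [hd, neg_le_neg_iff]
      calc ((n - k - j).choose (k - j) : ℝ)
          ≤ r ^ j * C := ratio_real n k hn j (by omega)
        _ ≤ r ^ 3 * C := mul_le_mul_of_nonneg_right (pow_le_pow_of_le_one hr0 hr1 hj3) hC0
  -- main inequality
  have hmain : (((F ×ˢ F).filter (fun p => Disjoint p.1.val p.2.val)).card : ℝ)
      ≥ (F.card : ℝ) * C * (α - r * (η + r ^ 2)) := by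
    rw [hEspec, hsplit]
    have ht1 : -(r * C) * ∑ A, (g 1 A) ^ 2 ≤ Dval n k 1 * ∑ A, (g 1 A) ^ 2 :=
      mul_le_mul_of_nonneg_right hD1 (hw0 1)
    have ht2 : -(r ^ 3 * C) * ∑ j ∈ Finset.Ico 2 (k + 1), ∑ A, (g j A) ^ 2
        ≤ ∑ j ∈ Finset.Ico 2 (k + 1), Dval n k j * ∑ A, (g j A) ^ 2 := by
      rw [Finset.mul_sum]
      exact Finset.sum_le_sum fun j hj => mul_le_mul_of_nonneg_right (hDtail j hj) (hw0 j)
    have ht3 : -(r ^ 3 * C) * (F.card : ℝ)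
        ≤ -(r ^ 3 * C) * ∑ j ∈ Finset.Ico 2 (k + 1), ∑ A, (g j A) ^ 2 := by
      apply mul_le_mul_of_nonpos_left htailw
      have h0 : 0 ≤ r ^ 3 * C := by positivity
      linarith
    have ht1' : -(r * C) * (η * (F.card : ℝ)) ≤ Dval n k 1 * ∑ A, (g 1 A) ^ 2 := by
      rw [← hw1val]; exact ht1
    have htt : -(r ^ 3 * C) * (F.card : ℝ)
        ≤ ∑ j ∈ Finset.Ico 2 (k + 1), Dval n k j * ∑ A, (g j A) ^ 2 := le_trans ht3 ht2
    have hring : (F.card : ℝ) * C * (α - r * (η + r ^ 2))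
        = C * (α * (F.card : ℝ)) + (-(r * C) * (η * (F.card : ℝ)))
          + (-(r ^ 3 * C) * (F.card : ℝ)) := by ring
    rw [hD0, hw0val]
    linarith
  refine ⟨hmain, ?_⟩
  have hdeg : (((F ×ˢ F).filter (fun p => Disjoint p.1.val p.2.val)).card : ℝ)
      = ∑ A ∈ F, ((F.filter (fun B => Disjoint A.val B.val)).card : ℝ) := by
    rw [hE1]
    exact Finset.sum_congr rfl fun A _ => Finset.sum_boole _ _
  have hsum : (∑ _A ∈ F, C * (α - r * (η + r ^ 2)))
      ≤ ∑ A ∈ F, ((F.filter (fun B => Disjoint A.val B.val)).card : ℝ) := by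
    rw [Finset.sum_const, nsmul_eq_mul, ← hdeg]
    calc (F.card : ℝ) * (C * (α - r * (η + r ^ 2)))
        = (F.card : ℝ) * C * (α - r * (η + r ^ 2)) := by ring
      _ ≤ _ := hmain
  obtain ⟨A, hA, hAge⟩ := Finset.exists_le_of_sum_le hF hsum
  exact ⟨A, hA, hAge⟩
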